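/- Discrete spectral risk measures are coherent: let φ₁ ≥ φ₂ ≥ … ≥ φ_N ≥ 0 with Σᵢ φᵢ = 1; then M_φ^(N)(x) = −Σᵢ φᵢ x_{(i)} (where x_{(1)} ≤ … ≤ x_{(N)} are the order statistics of x ∈ ℝ^N) defines a functional on ℝ^N that is monotonous (componentwise x ≤ y implies M(y) ≤ M(x)), sub-additive (M(x+y) ≤ M(x)+M(y)), positively homogeneous, and satisfies M(x + a·𝟙) = M(x) − a. -/

import Mathlib

open MeasureTheory

/-- The increasing rearrangement (order statistics) of `x`. -/
noncomputable def srt {N : ℕ} (x : Fin N → ℝ) : Fin N → ℝ := x ∘ Tuple.sort x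

lemma srt_mono {N : ℕ} (x : Fin N → ℝ) : Monotone (srt x) :=
  Tuple.monotone_sort x

/-- For a monotone `g`, sorting commutes with postcomposition. -/
lemma srt_comp {N : ℕ} (x : Fin N → ℝ) (g : ℝ → ℝ) (hg : Monotone g) :
    srt (g ∘ x) = g ∘ srt x := by
  have h : (g ∘ x) ∘ Tuple.sort x = (g ∘ x) ∘ Tuple.sort (g ∘ x) :=
    Tuple.comp_sort_eq_comp_iff_monotone.mpr (hg.comp (Tuple.monotone_sort x))
  calc srt (g ∘ x) = (g ∘ x) ∘ Tuple.sort (g ∘ x) := rfl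
    _ = (g ∘ x) ∘ Tuple.sort x := h.symm
    _ = g ∘ srt x := rfl

lemma srt_le_srt {N : ℕ} (x y : Fin N → ℝ) (hxy : ∀ i, x i ≤ y i) (i : Fin N) :
    srt x i ≤ srt y i := by
  classical
  set I : Finset (Fin N) := Finset.image (Tuple.sort x) (Finset.Ici i) with hIdef
  set J : Finset (Fin N) := Finset.image (Tuple.sort y) (Finset.Iic i) with hJdef
  have hI : I.card = N - (i : ℕ) := by
    rw [hIdef, Finset.card_image_of_injective _ (Tuple.sort x).injective, Fin.card_Ici]
  have hJ : J.card = (i : ℕ) + 1 := by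
    rw [hJdef, Finset.card_image_of_injective _ (Tuple.sort y).injective, Fin.card_Iic]
  have hiN : (i : ℕ) < N := i.isLt
  have hne : (I ∩ J).Nonempty := by
    by_contra h
    rw [Finset.not_nonempty_iff_eq_empty] at h
    have hcard := Finset.card_union_of_disjoint (Finset.disjoint_iff_inter_eq_empty.mpr h)
    have hle : (I ∪ J).card ≤ N := by
      simpa using Finset.card_le_card (Finset.subset_univ (I ∪ J))
    omega
  obtain ⟨m, hm⟩ := hne
  rw [Finset.mem_inter] at hm
  obtain ⟨k, hk, hkm⟩ := Finset.mem_image.mp hm.1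
  obtain ⟨l, hl, hlm⟩ := Finset.mem_image.mp hm.2
  have hik : i ≤ k := Finset.mem_Ici.mp hk
  have hli : l ≤ i := Finset.mem_Iic.mp hl
  calc srt x i ≤ srt x k := srt_mono x hik
    _ = x m := by rw [← hkm]; rfl
    _ ≤ y m := hxy m
    _ = srt y l := by rw [← hlm]; rfl
    _ ≤ srt y i := srt_mono y hli

/-- Minimality: the sorted inner product with a decreasing weight is minimal. -/
lemma srt_sum_le {N : ℕ} (φ : Fin N → ℝ) (hdec : ∀ i j : Fin N, i ≤ j → φ j ≤ φ i)
    (x : Fin N → ℝ) (σ : Equiv.Perm (Fin N)) :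
    ∑ i, φ i * srt x i ≤ ∑ i, φ i * x (σ i) := by
  have hav : Antivary φ (srt x) := by
    intro i j hij
    rcases le_total i j with h | h
    · exact hdec i j h
    · exact absurd (srt_mono x h) (not_le.mpr hij)
  have key := hav.sum_smul_le_sum_smul_comp_perm (σ := σ.trans (Tuple.sort x).symm)
  simp only [smul_eq_mul, Equiv.trans_apply] at key
  convert key using 2 with i
  show φ i * x (σ i) = φ i * srt x ((Tuple.sort x).symm (σ i))
  congr 1
  show x (σ i) = x (Tuple.sort x ((Tuple.sort x).symm (σ i)))
  rw [Equiv.apply_symm_apply]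
  rfl

theorem discrete_spectral_coherent {N : ℕ} (φ : Fin N → ℝ)
    (hpos : ∀ i, 0 ≤ φ i) (hdec : ∀ i j : Fin N, i ≤ j → φ j ≤ φ i)
    (hsum : ∑ i, φ i = 1) :
    (∀ x y : Fin N → ℝ, (∀ i, x i ≤ y i) →
        -∑ i, φ i * srt y i ≤ -∑ i, φ i * srt x i) ∧
    (∀ x y : Fin N → ℝ,
        -∑ i, φ i * srt (x + y) i ≤ (-∑ i, φ i * srt x i) + -∑ i, φ i * srt y i) ∧
    (∀ (x : Fin N → ℝ) (h : ℝ), 0 < h →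
        -∑ i, φ i * srt (h • x) i = h * -∑ i, φ i * srt x i) ∧
    (∀ (x : Fin N → ℝ) (a : ℝ),
        -∑ i, φ i * srt (x + fun _ => a) i = (-∑ i, φ i * srt x i) - a) := by
  refine ⟨?_, ?_, ?_, ?_⟩
  · intro x y hxy
    apply neg_le_neg
    exact Finset.sum_le_sum fun i _ => mul_le_mul_of_nonneg_left (srt_le_srt x y hxy i) (hpos i)
  · intro x y
    rw [← neg_add]
    apply neg_le_neg
    have h1 : ∑ i, φ i * srt (x + y) i
        = ∑ i, φ i * x (Tuple.sort (x+y) i) + ∑ i, φ i * y (Tuple.sort (x+y) i) := by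
      rw [← Finset.sum_add_distrib]
      refine Finset.sum_congr rfl fun i _ => ?_
      show φ i * (x + y) (Tuple.sort (x+y) i) = _
      simp [mul_add]
    rw [h1]
    exact add_le_add (srt_sum_le φ hdec x (Tuple.sort (x+y))) (srt_sum_le φ hdec y (Tuple.sort (x+y)))
  · intro x h hh
    have hmono : Monotone (fun t : ℝ => h * t) := fun a b hab => by
      simpa using mul_le_mul_of_nonneg_left hab hh.le
    have hsx : srt (h • x) = fun i => h * srt x i := by
      have h1 : h • x = (fun t : ℝ => h * t) ∘ x := by ext i; simp
      rw [h1, srt_comp x _ hmono]; rfl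
    rw [hsx]
    have hS : ∑ i, φ i * (h * srt x i) = h * ∑ i, φ i * srt x i := by
      rw [Finset.mul_sum]
      exact Finset.sum_congr rfl fun i _ => by ring
    simp only []
    rw [hS]; ring
  · intro x a
    have hmono : Monotone (fun t : ℝ => t + a) := fun u v huv => by simpa using add_le_add_right huv a
    have hsx : srt (x + fun _ => a) = fun i => srt x i + a := by
      have h1 : (x + fun _ => a) = (fun t : ℝ => t + a) ∘ x := by ext i; simp
      rw [h1, srt_comp x _ hmono]; rfl
    rw [hsx]
    have hS : ∑ i, φ i * (srt x i + a) = (∑ i, φ i * srt x i) + a := by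
      simp [mul_add, Finset.sum_add_distrib, ← Finset.sum_mul, hsum]
    simp only []
    rw [hS]; ring
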